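/- Auxiliary sum bounds: assume the deterministic degree bounds D_0(a,a) ≥ c max{n θ̄ θ_a, n θ̄²} for all a, and the incoherence bounds |ξ_k(a)| ≤ sqrt(μ_a/n) with μ_a = C θ_a²/(θ̄ (θ̄ ∨ θ_a)). Then, up to constants depending only on the model constants: (i) |D_0(a,a)^{−3/2} ξ_k(a)| ≲ 1/(n² θ̄² (θ̄ ∨ θ_a)) for all a; (ii) Σ_{a≠i} μ_a θ_a D_0(a,a)^{−1} ≲ sqrt(log n)/θ̄; (iii) Σ_{a=1}^n ξ_k(a) D_0(a,a)^{−3/2} ≲ 1/(n θ̄³); (iv) Σ_{a=1}^n sqrt(μ_a θ_a²/(θ̄ ∧ θ_a)) ≲ n sqrt(θ_max³/θ̄²); (v) Σ_{a=1}^n θ_a sqrt(μ_a/(θ̄ ∨ θ_a)) ≲ n sqrt(θ̄). -/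

import Mathlib

noncomputable section

open Matrix MeasureTheory Filter Finset Asymptotics
open scoped BigOperators Topology

namespace DCMM

/-- Euclidean dot product on `Fin m → ℝ`. -/
def dot {m : ℕ} (v w : Fin m → ℝ) : ℝ := ∑ x, v x * w x

/-- Squared Euclidean norm. -/
def sqnorm {m : ℕ} (v : Fin m → ℝ) : ℝ := ∑ x, v x ^ 2

/-- Euclidean norm. -/
def enorm {m : ℕ} (v : Fin m → ℝ) : ℝ := Real.sqrt (sqnorm v)

/-- Supremum (ℓ^∞) norm. -/
def supNorm {m : ℕ} (v : Fin m → ℝ) : ℝ := ⨆ x, |v x|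

/-- Operator (spectral) norm of a real matrix. -/
def opNorm {m k : ℕ} (A : Matrix (Fin m) (Fin k) ℝ) : ℝ :=
  sSup ((fun v => enorm (A.mulVec v)) '' {v | sqnorm v ≤ 1})

/-- The regularized degree `(e_i + n⁻¹ 1_n)ᵀ A 1_n`. -/
def degOf {n : ℕ} (A : Matrix (Fin n) (Fin n) ℝ) (i : Fin n) : ℝ :=
  (∑ j, A i j) + (1 / (n : ℝ)) * ∑ k, ∑ j, A k j

/-- The regularized graph Laplacian `D^{-1/2} A D^{-1/2}`. -/
def laplOf {n : ℕ} (A : Matrix (Fin n) (Fin n) ℝ) : Matrix (Fin n) (Fin n) ℝ :=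
  Matrix.diagonal (fun i => (Real.sqrt (degOf A i))⁻¹) * A *
    Matrix.diagonal (fun i => (Real.sqrt (degOf A i))⁻¹)

/-- A degree–corrected mixed membership (DCMM) model with `n` nodes and `K` communities. -/
structure Model (n K : ℕ) where
  θ : Fin n → ℝ
  Pi : Matrix (Fin n) (Fin K) ℝ
  P : Matrix (Fin K) (Fin K) ℝ
  θ_pos : ∀ i, 0 < θ i
  Pi_nonneg : ∀ i k, 0 ≤ Pi i k
  Pi_rowsum : ∀ i, ∑ k, Pi i k = 1
  P_symm : P.IsSymm
  P_nonneg : ∀ a b, 0 ≤ P a b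
  P_unitdiag : ∀ a, P a a = 1
  P_nonsing : IsUnit P.det
  H_nonneg : ∀ i j, 0 ≤ (Matrix.diagonal θ * Pi * P * Piᵀ * Matrix.diagonal θ) i j
  H_le_one : ∀ i j, (Matrix.diagonal θ * Pi * P * Piᵀ * Matrix.diagonal θ) i j ≤ 1

namespace Model

variable {n K : ℕ} (M : Model n K)

/-- The edge probability matrix `H = Θ Π P Πᵀ Θ`. -/
def H : Matrix (Fin n) (Fin n) ℝ :=
  Matrix.diagonal M.θ * M.Pi * M.P * M.Piᵀ * Matrix.diagonal M.θ

/-- Average degree parameter. -/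
def θbar : ℝ := (∑ i, M.θ i) / n

def θmax : ℝ := ⨆ i, M.θ i

def θmin : ℝ := ⨅ i, M.θ i

/-- The population regularized degrees `D₀(i,i)`. -/
def deg : Fin n → ℝ := degOf M.H

/-- The population regularized Laplacian `L₀`. -/
def L0 : Matrix (Fin n) (Fin n) ℝ := laplOf M.H

/-- Node `i` is a pure node of community `k`. -/
def pure (i : Fin n) (k : Fin K) : Prop := ∀ l, M.Pi i l = if l = k then 1 else 0

/-- `θ_{k,min}`: the smallest degree parameter among pure nodes of community `k`. -/
def θpureMin (k : Fin K) : ℝ := sInf {x | ∃ i, M.pure i k ∧ x = M.θ i}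

/-- The community balance matrix `G = K Πᵀ Θ D₀⁻¹ Θ Π`. -/
def G : Matrix (Fin K) (Fin K) ℝ :=
  (K : ℝ) • (M.Piᵀ * Matrix.diagonal M.θ * Matrix.diagonal (fun i => (M.deg i)⁻¹) *
    Matrix.diagonal M.θ * M.Pi)

/-- The balance matrix `F = K ‖θ‖⁻² Πᵀ Θ² Π`. -/
def F : Matrix (Fin K) (Fin K) ℝ :=
  ((K : ℝ) / (∑ i, M.θ i ^ 2)) • (M.Piᵀ * Matrix.diagonal M.θ * Matrix.diagonal M.θ * M.Pi)

end Model

/-- `lam`, `xi` is a system of unit eigenvalue/eigenvector pairs of `L`,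
ordered decreasingly in magnitude. -/
structure IsEigen {n K : ℕ} (L : Matrix (Fin n) (Fin n) ℝ)
    (lam : Fin K → ℝ) (xi : Fin K → Fin n → ℝ) : Prop where
  eig : ∀ k, L.mulVec (xi k) = lam k • xi k
  unit : ∀ k, sqnorm (xi k) = 1
  orth : ∀ k l, k ≠ l → dot (xi k) (xi l) = 0
  ordered : ∀ k l, k ≤ l → |lam l| ≤ |lam k|

/-- Assumptions 1 and 2 of the paper (the fixed-`n` parts), with constants `c1, …, c9`. -/
structure Assm {n K : ℕ} (M : Model n K) (lam : Fin K → ℝ) (xi : Fin K → Fin n → ℝ)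
    (lamPG eta1 : Fin K → ℝ) (c1 c2 c3 c4 c5 c6 c7 c8 c9 : ℝ) : Prop where
  eigen : IsEigen M.L0 lam xi
  xi1_pos : ∀ h0 : 0 < K, ∀ i, 0 < xi ⟨0, h0⟩ i
  pg_eigen : ∀ k, ∃ v : Fin K → ℝ, v ≠ 0 ∧ (M.P * M.G).mulVec v = lamPG k • v
  pg_ordered : ∀ k l : Fin K, k ≤ l → |lamPG l| ≤ |lamPG k|
  G_norm : opNorm M.G ≤ c1
  Ginv_norm : opNorm M.G⁻¹ ≤ c1
  balance : ∀ k, c1 * (∑ i, M.θ i) ≤ ∑ i, M.θ i * M.Pi i k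
  pg_gap : ∀ h0 : 0 < K, ∀ k, k ≠ (⟨0, h0⟩ : Fin K) →
    lamPG k ≤ min ((1 - c2) * lamPG ⟨0, h0⟩) (c2⁻¹ * Real.sqrt K)
  eta1_eig : ∀ h0 : 0 < K, (M.P * M.G).mulVec eta1 = lamPG ⟨0, h0⟩ • eta1
  eta1_pos : ∀ k, 0 < eta1 k
  eta1_bal : ∀ k l, c3 * eta1 l ≤ eta1 k
  pure_exists : ∀ k, ∃ i, M.pure i k
  lam_gap : ∀ k l, l ≠ k → c4 * |lam k| ≤ |lam k - lam l|
  lamK_large : ∀ h : K - 1 < K,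
    Real.sqrt (Real.log n / (n * M.θbar ^ 2)) ≤ lam ⟨K - 1, h⟩
  F_norm : opNorm M.F ≤ c5
  Finv_norm : opNorm M.F⁻¹ ≤ c6
  θ_low : ∀ i, c7 * Real.sqrt (Real.log n / n) ≤ M.θ i
  θ_up : ∀ i, M.θ i ≤ c8
  P_max : ∀ a b, M.P a b ≤ c9

/-- `X` is a random adjacency matrix generated from the DCMM model `M`:
symmetric, Bernoulli entries with success probabilities `H i j`,
independent on and above the diagonal. -/
structure IsAdj {n K : ℕ} (M : Model n K) {Ω : Type} [MeasurableSpace Ω]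
    (μ : Measure Ω) (X : Ω → Matrix (Fin n) (Fin n) ℝ) : Prop where
  meas : ∀ i j, Measurable fun ω => X ω i j
  symm : ∀ ω, (X ω).IsSymm
  zero_one : ∀ ω i j, X ω i j = 0 ∨ X ω i j = 1
  bern : ∀ i j, μ {ω | X ω i j = 1} = ENNReal.ofReal (M.H i j)
  indep : ProbabilityTheory.iIndepFun (m := fun _ => (inferInstance : MeasurableSpace ℝ))
    (fun (p : {p : Fin n × Fin n // p.1 ≤ p.2}) ω => X ω p.1.1 p.1.2) μ

/-- Entrywise eigenvector ratios `r_i = (ξ₂(i)/ξ₁(i), …, ξ_K(i)/ξ₁(i))`. -/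
def ratioOf {n K : ℕ} (xi : Fin K → Fin n → ℝ) (i : Fin n) (j : Fin (K - 1)) : ℝ :=
  xi ⟨(j : ℕ) + 1, by have := j.isLt; omega⟩ i / xi ⟨0, by have := j.isLt; omega⟩ i

/-- A run of the modified successive projection vertex-hunting algorithm (Algorithm 2)
on inputs `rhat` with radius `φ`. -/
structure SPRun {n K : ℕ} (rhat : Fin n → Fin (K - 1) → ℝ) (φ : ℝ) where
  Z : Fin (K + 1) → Fin n → Fin K → ℝ
  isel : Fin K → Fin n
  Chat : Fin K → Finset (Fin n)
  vhat : Fin K → Fin (K - 1) → ℝ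
  Z_init : ∀ i (j : Fin K), Z 0 i j =
    if _ : (j : ℕ) = 0 then 1 else rhat i ⟨(j : ℕ) - 1, by have := j.isLt; omega⟩
  isel_max : ∀ (k : Fin K) (i : Fin n),
    enorm (Z k.castSucc i) ≤ enorm (Z k.castSucc (isel k))
  Z_update : ∀ (k : Fin K) (i : Fin n) (j : Fin K),
    Z k.succ i j = Z k.castSucc i j -
      dot (Z k.castSucc (isel k)) (Z k.castSucc i) / sqnorm (Z k.castSucc (isel k)) *
        Z k.castSucc (isel k) j
  Chat_mem : ∀ (k : Fin K) (i : Fin n),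
    i ∈ Chat k ↔ enorm (fun j => rhat i j - rhat (isel k) j) ≤ φ
  vhat_def : ∀ (k : Fin K) (j : Fin (K - 1)),
    vhat k j = (∑ i ∈ Chat k, rhat i j) / (Chat k).card

/-- `b̂₁(k) = (λ̂₁ + v̂_kᵀ Λ̂₋₁ v̂_k)^{-1/2}`. -/
def b1Of {K : ℕ} (hK : 0 < K) (lam : Fin K → ℝ) (v : Fin (K - 1) → ℝ) : ℝ :=
  (Real.sqrt (lam ⟨0, hK⟩ +
    ∑ j : Fin (K - 1), lam ⟨(j : ℕ) + 1, by have := j.isLt; omega⟩ * v j ^ 2))⁻¹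

/-- The matrix `Q̂` whose `k`-th row is `(1, v̂_kᵀ)`. -/
def QhatOf {K : ℕ} (vhat : Fin K → Fin (K - 1) → ℝ) : Matrix (Fin K) (Fin K) ℝ :=
  fun k j => if _ : (j : ℕ) = 0 then 1 else vhat k ⟨(j : ℕ) - 1, by have := j.isLt; omega⟩

/-- The estimator `P̂ = diag(b̂₁) Q̂ Λ̂ Q̂ᵀ diag(b̂₁)` of Algorithm 1. -/
def PhatOf {K : ℕ} (hK : 0 < K) (lamHat : Fin K → ℝ) (vhat : Fin K → Fin (K - 1) → ℝ) :
    Matrix (Fin K) (Fin K) ℝ :=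
  fun a b => b1Of hK lamHat (vhat a) *
    (∑ k, QhatOf vhat a k * lamHat k * QhatOf vhat b k) * b1Of hK lamHat (vhat b)

/-- The membership estimate `π̂_i` of Algorithm 1, built from the barycentric
coordinates `what` of the embedded nodes. -/
def piHatOf {n K : ℕ} (hK : 0 < K) (lamHat : Fin K → ℝ) (vhat : Fin K → Fin (K - 1) → ℝ)
    (what : Fin n → Fin K → ℝ) (i : Fin n) (k : Fin K) : ℝ :=
  max (what i k / b1Of hK lamHat (vhat k)) 0 /
    ∑ l, max (what i l / b1Of hK lamHat (vhat l)) 0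

/-- The estimator `Θ̂(i,i) = ξ̂₁(i) D̂(i,i)^{1/2} (π̂_iᵀ b̂₁)⁻¹` of Algorithm 1. -/
def thetaHatOf {n K : ℕ} (hK : 0 < K) (A : Matrix (Fin n) (Fin n) ℝ)
    (lamHat : Fin K → ℝ) (xiHat : Fin K → Fin n → ℝ) (vhat : Fin K → Fin (K - 1) → ℝ)
    (what : Fin n → Fin K → ℝ) (i : Fin n) : ℝ :=
  xiHat ⟨0, hK⟩ i * Real.sqrt (degOf A i) *
    (∑ k, piHatOf hK lamHat vhat what i k * b1Of hK lamHat (vhat k))⁻¹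

/-- `Δ_r`: the minimal separation between a non-pure node embedding and a vertex. -/
def DeltaR {n K : ℕ} (M : Model n K) (xi : Fin K → Fin n → ℝ)
    (v : Fin K → Fin (K - 1) → ℝ) : ℝ :=
  sInf {x | ∃ k i, ¬ M.pure i k ∧ x = enorm (fun j => ratioOf xi i j - v k j)}

/-- `ν_n = min{K^{-1/2} λ₁, λ_K}`. -/
def nuOf {K : ℕ} (hK : 0 < K) (lam : Fin K → ℝ) : ℝ :=
  min (lam ⟨0, hK⟩ / Real.sqrt K) (lam ⟨K - 1, by omega⟩)

/-- Index type of the (weakly) upper triangular entries of an `n × n` matrix. -/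
def upperPairs (n : ℕ) : Type := {p : Fin n × Fin n // p.1 ≤ p.2}

instance (n : ℕ) : Fintype (upperPairs n) := by unfold upperPairs; infer_instance
instance (n : ℕ) : DecidableEq (upperPairs n) := by unfold upperPairs; infer_instance

/-- The symmetric 0/1 matrix determined by a selection of upper-triangular entries. -/
def matOfSel {n : ℕ} (s : upperPairs n → Bool) : Matrix (Fin n) (Fin n) ℝ :=
  fun i j => if h : i ≤ j then (if s ⟨(i, j), h⟩ then 1 else 0)
    else (if s ⟨(j, i), le_of_not_ge h⟩ then 1 else 0)

/-- The probability that the DCMM adjacency matrix equals `matOfSel s`. -/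
def selProb {n K : ℕ} (M : Model n K) (s : upperPairs n → Bool) : ℝ :=
  ∏ p : upperPairs n, (if s p then M.H p.1.1 p.1.2 else 1 - M.H p.1.1 p.1.2)

/-- The risk `E |T(X) - target|` of the estimator `T` under the model `M`. -/
def risk {n K : ℕ} (M : Model n K) (T : Matrix (Fin n) (Fin n) ℝ → ℝ) (target : ℝ) : ℝ :=
  ∑ s : upperPairs n → Bool, selProb M s * |T (matOfSel s) - target|

/-- The noise matrix `W = X - H`. -/
def Wof {n K : ℕ} (M : Model n K) (A : Matrix (Fin n) (Fin n) ℝ) :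
    Matrix (Fin n) (Fin n) ℝ := A - M.H

/-- `Σ_j W_{ij} + n⁻¹ Σ_l Σ_m W_{lm}`. -/
def wsum {n K : ℕ} (M : Model n K) (A : Matrix (Fin n) (Fin n) ℝ) (i : Fin n) : ℝ :=
  (∑ j, Wof M A i j) + (1 / (n : ℝ)) * ∑ l, ∑ m, Wof M A l m

/-- First-order term of the Taylor expansion of `D̂^{-1/2}`. -/
def Delta1 {n K : ℕ} (M : Model n K) (A : Matrix (Fin n) (Fin n) ℝ) :
    Matrix (Fin n) (Fin n) ℝ :=
  Matrix.diagonal fun i => -(1 / 2) * wsum M A i / Real.sqrt (M.deg i) ^ 3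

/-- Second-order term of the Taylor expansion of `D̂^{-1/2}`. -/
def Delta2 {n K : ℕ} (M : Model n K) (A : Matrix (Fin n) (Fin n) ℝ) :
    Matrix (Fin n) (Fin n) ℝ :=
  Matrix.diagonal fun i => (3 / 4) * wsum M A i ^ 2 / Real.sqrt (M.deg i) ^ 5

/-- `D₀^{-1/2}` as a diagonal matrix. -/
def Dhalfinv {n K : ℕ} (M : Model n K) : Matrix (Fin n) (Fin n) ℝ :=
  Matrix.diagonal fun i => (Real.sqrt (M.deg i))⁻¹

/-- The Laplacian noise `E = L̂ - L₀`. -/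
def Emat {n K : ℕ} (M : Model n K) (A : Matrix (Fin n) (Fin n) ℝ) :
    Matrix (Fin n) (Fin n) ℝ := laplOf A - M.L0

/-- The first-order expansion `E₁` of the Laplacian noise. -/
def E1mat {n K : ℕ} (M : Model n K) (A : Matrix (Fin n) (Fin n) ℝ) :
    Matrix (Fin n) (Fin n) ℝ :=
  Dhalfinv M * Wof M A * Dhalfinv M + Delta1 M A * M.H * Dhalfinv M +
    Dhalfinv M * M.H * Delta1 M A

/-- The second-order expansion `E₂` of the Laplacian noise. -/
def E2mat {n K : ℕ} (M : Model n K) (A : Matrix (Fin n) (Fin n) ℝ) :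
    Matrix (Fin n) (Fin n) ℝ :=
  Delta2 M A * M.H * Dhalfinv M + Delta1 M A * Wof M A * Dhalfinv M +
    Delta1 M A * M.H * Delta1 M A + Dhalfinv M * Wof M A * Delta1 M A +
    Dhalfinv M * M.H * Delta2 M A

set_option maxHeartbeats 1000000 in
/-- Lemma A.5: auxiliary sum bounds. -/
theorem statement_15 (c1 c2 c3 c4 c5 c6 c7 c8 c9 cD Cmu : ℝ)
    (hc1 : 0 < c1) (hc2 : 0 < c2) (hc3 : 0 < c3) (hc4 : 0 < c4) (hc5 : 0 < c5)
    (hc6 : 0 < c6) (hc7 : 0 < c7) (hc8 : 0 < c8) (hc9 : 0 < c9)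
    (hcD : 0 < cD) (hCmu : 0 < Cmu) :
    ∃ C' : ℝ, 0 < C' ∧
      ∀ (n K : ℕ) (hK : 0 < K) (M : Model n K)
        (lam : Fin K → ℝ) (xi : Fin K → Fin n → ℝ) (lamPG eta1 : Fin K → ℝ),
        Assm M lam xi lamPG eta1 c1 c2 c3 c4 c5 c6 c7 c8 c9 →
        -- deterministic degree bounds
        (∀ a, cD * max (n * M.θbar * M.θ a) (n * M.θbar ^ 2) ≤ M.deg a) →
        -- incoherence bounds, with μ_a = Cmu θ_a² / (θ̄ (θ̄ ∨ θ_a))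
        (∀ k a, |xi k a| ≤
          Real.sqrt (Cmu * M.θ a ^ 2 / (M.θbar * max M.θbar (M.θ a)) / n)) →
        ∀ k : Fin K,
          -- (i)
          (∀ a, |(Real.sqrt (M.deg a) ^ 3)⁻¹ * xi k a| ≤
            C' / (n ^ 2 * M.θbar ^ 2 * max M.θbar (M.θ a))) ∧
          -- (ii)
          (∀ i : Fin n, ∑ a ∈ Finset.univ.erase i,
              (Cmu * M.θ a ^ 2 / (M.θbar * max M.θbar (M.θ a))) * M.θ a * (M.deg a)⁻¹ ≤
            C' * Real.sqrt (Real.log n) / M.θbar) ∧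
          -- (iii)
          (∑ a, xi k a * (Real.sqrt (M.deg a) ^ 3)⁻¹ ≤ C' / (n * M.θbar ^ 3)) ∧
          -- (iv)
          (∑ a, Real.sqrt ((Cmu * M.θ a ^ 2 / (M.θbar * max M.θbar (M.θ a))) * M.θ a ^ 2 /
              min M.θbar (M.θ a)) ≤ C' * n * Real.sqrt (M.θmax ^ 3 / M.θbar ^ 2)) ∧
          -- (v)
          (∑ a, M.θ a * Real.sqrt ((Cmu * M.θ a ^ 2 / (M.θbar * max M.θbar (M.θ a))) /
              max M.θbar (M.θ a)) ≤ C' * n * Real.sqrt M.θbar) := by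
  have hsCmu : (0:ℝ) < Real.sqrt Cmu := Real.sqrt_pos.mpr hCmu
  have hscD : (0:ℝ) < Real.sqrt cD := Real.sqrt_pos.mpr hcD
  have hlog2 : (0:ℝ) < Real.sqrt (Real.log 2) :=
    Real.sqrt_pos.mpr (Real.log_pos (by norm_num))
  set C1 : ℝ := Real.sqrt Cmu / Real.sqrt cD ^ 3 with hC1
  set C2 : ℝ := Cmu / (cD * Real.sqrt (Real.log 2)) with hC2
  set C' : ℝ := max C1 (max C2 (Real.sqrt Cmu)) with hC'def
  have hC'pos : 0 < C' := lt_of_lt_of_le hsCmu (le_max_of_le_right (le_max_right _ _))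
  have hC1le : C1 ≤ C' := le_max_left _ _
  have hC2le : C2 ≤ C' := le_max_of_le_right (le_max_left _ _)
  have hCmule : Real.sqrt Cmu ≤ C' := le_max_of_le_right (le_max_right _ _)
  refine ⟨C', hC'pos, ?_⟩
  intro n K hK M lam xi lamPG eta1 hA hdegB hxiB k
  rcases Nat.eq_zero_or_pos n with hn0 | hn
  · subst hn0
    refine ⟨fun a => a.elim0, fun i => i.elim0, ?_, ?_, ?_⟩ <;> simp
  -- main case : 1 ≤ n
  have hnR : (0:ℝ) < n := by exact_mod_cast hn
  have hθ : ∀ a, 0 < M.θ a := M.θ_pos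
  have hθbardef : M.θbar = (∑ i, M.θ i) / n := rfl
  have hsumθpos : 0 < ∑ i, M.θ i :=
    Finset.sum_pos (fun i _ => hθ i) ⟨⟨0, hn⟩, Finset.mem_univ _⟩
  have hθbar : 0 < M.θbar := by rw [hθbardef]; exact div_pos hsumθpos hnR
  have hsumθ : ∑ i, M.θ i = n * M.θbar := by
    rw [hθbardef]; field_simp
  have hMx : ∀ a, 0 < max M.θbar (M.θ a) := fun a => lt_max_of_lt_left hθbar
  have hθle : ∀ a, M.θ a ≤ max M.θbar (M.θ a) := fun a => le_max_right _ _
  have hbarle : ∀ a, M.θbar ≤ max M.θbar (M.θ a) := fun a => le_max_left _ _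
  have hdeg' : ∀ a, cD * ((n:ℝ) * M.θbar * max M.θbar (M.θ a)) ≤ M.deg a := by
    intro a
    refine le_trans (le_of_eq ?_) (hdegB a)
    have : (n:ℝ) * M.θbar * max M.θbar (M.θ a)
        = max ((n:ℝ) * M.θbar * M.θ a) ((n:ℝ) * M.θbar ^ 2) := by
      rw [mul_max_of_nonneg _ _ (show (0:ℝ) ≤ (n:ℝ) * M.θbar by positivity), max_comm]
      congr 1 <;> ring
    rw [this]
  have hdegpos : ∀ a, 0 < M.deg a := fun a =>
    lt_of_lt_of_le (by positivity) (hdeg' a)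
  have hxiB' : ∀ a, |xi k a| ≤
      Real.sqrt Cmu * M.θ a / Real.sqrt ((n:ℝ) * M.θbar * max M.θbar (M.θ a)) := by
    intro a
    refine (hxiB k a).trans (le_of_eq ?_)
    have h1 : Cmu * M.θ a ^ 2 / (M.θbar * max M.θbar (M.θ a)) / n
        = Cmu * M.θ a ^ 2 / ((n:ℝ) * M.θbar * max M.θbar (M.θ a)) := by
      rw [div_div]
      congr 1
      ring
    rw [h1, Real.sqrt_div (by positivity), Real.sqrt_mul hCmu.le,
      Real.sqrt_sq (hθ a).le]
  have hsdeg : ∀ a, Real.sqrt cD * Real.sqrt ((n:ℝ) * M.θbar * max M.θbar (M.θ a))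
      ≤ Real.sqrt (M.deg a) := by
    intro a
    rw [← Real.sqrt_mul hcD.le]
    exact Real.sqrt_le_sqrt (hdeg' a)
  have hC'cD : Real.sqrt Cmu ≤ C' * Real.sqrt cD ^ 3 := by
    have h1 : C1 * Real.sqrt cD ^ 3 = Real.sqrt Cmu := by
      rw [hC1]; field_simp
    nlinarith [mul_le_mul_of_nonneg_right hC1le (le_of_lt (pow_pos hscD 3))]
  -- Part (i)
  have part1 : ∀ a, |(Real.sqrt (M.deg a) ^ 3)⁻¹ * xi k a| ≤
      C' / ((n:ℝ) ^ 2 * M.θbar ^ 2 * max M.θbar (M.θ a)) := by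
    intro a
    set Mx := max M.θbar (M.θ a) with hMxdef
    set s := Real.sqrt ((n:ℝ) * M.θbar * Mx) with hs
    have hspos : 0 < s := Real.sqrt_pos.mpr (by positivity)
    have hs2 : s ^ 2 = (n:ℝ) * M.θbar * Mx := Real.sq_sqrt (by positivity)
    set t := Real.sqrt (M.deg a) with ht
    have htpos : 0 < t := Real.sqrt_pos.mpr (hdegpos a)
    have ht3 : Real.sqrt cD ^ 3 * s ^ 3 ≤ t ^ 3 := by
      calc Real.sqrt cD ^ 3 * s ^ 3 = (Real.sqrt cD * s) ^ 3 := by ring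
        _ ≤ t ^ 3 := pow_le_pow_left₀ (by positivity) (hsdeg a) 3
    have hD : (0:ℝ) < (n:ℝ) ^ 2 * M.θbar ^ 2 * Mx := by positivity
    have hrw : |(t ^ 3)⁻¹ * xi k a| = |xi k a| / t ^ 3 := by
      rw [abs_mul, abs_inv, abs_pow, abs_of_pos htpos]
      ring
    rw [hrw, div_le_div_iff₀ (by positivity) hD]
    have hkey : Real.sqrt Cmu * M.θ a ≤ C' * Real.sqrt cD ^ 3 * Mx :=
      calc Real.sqrt Cmu * M.θ a ≤ Real.sqrt Cmu * Mx :=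
            mul_le_mul_of_nonneg_left (hθle a) hsCmu.le
        _ ≤ C' * Real.sqrt cD ^ 3 * Mx :=
            mul_le_mul_of_nonneg_right hC'cD (hMx a).le
    calc |xi k a| * ((n:ℝ) ^ 2 * M.θbar ^ 2 * Mx)
        ≤ Real.sqrt Cmu * M.θ a / s * ((n:ℝ) ^ 2 * M.θbar ^ 2 * Mx) :=
          mul_le_mul_of_nonneg_right (hxiB' a) hD.le
      _ ≤ C' * (Real.sqrt cD ^ 3 * s ^ 3) := by
          rw [div_mul_eq_mul_div, div_le_iff₀ hspos]
          have hs4 : s ^ 3 * s = ((n:ℝ) * M.θbar * Mx) ^ 2 := by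
            rw [show s ^ 3 * s = (s ^ 2) ^ 2 from by ring, hs2]
          rw [show C' * (Real.sqrt cD ^ 3 * s ^ 3) * s
              = C' * Real.sqrt cD ^ 3 * (s ^ 3 * s) from by ring, hs4]
          nlinarith [mul_le_mul_of_nonneg_right hkey hD.le]
      _ ≤ C' * t ^ 3 := mul_le_mul_of_nonneg_left ht3 hC'pos.le
  -- Part (ii)
  have part2 : ∀ i : Fin n, ∑ a ∈ Finset.univ.erase i,
      (Cmu * M.θ a ^ 2 / (M.θbar * max M.θbar (M.θ a))) * M.θ a * (M.deg a)⁻¹ ≤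
      C' * Real.sqrt (Real.log n) / M.θbar := by
    intro i
    rcases eq_or_lt_of_le (Nat.succ_le_of_lt hn) with h1 | h2
    · -- n = 1
      have hn1 : n = 1 := h1.symm
      subst hn1
      have hempty : (Finset.univ.erase i) = (∅ : Finset (Fin 1)) :=
        Finset.eq_empty_of_forall_notMem fun a ha =>
          (Finset.mem_erase.mp ha).1 (Subsingleton.elim a i)
      rw [hempty, Finset.sum_empty]
      norm_num
    · -- 2 ≤ n
      have h2n : (2:ℝ) ≤ n := by exact_mod_cast h2
      have hterm : ∀ a ∈ Finset.univ,
          (Cmu * M.θ a ^ 2 / (M.θbar * max M.θbar (M.θ a))) * M.θ a * (M.deg a)⁻¹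
          ≤ Cmu / cD * (M.θ a / ((n:ℝ) * M.θbar ^ 2)) := by
        intro a _
        have hθa := hθ a
        have hMxa := hMx a
        have hd : (M.deg a)⁻¹ ≤ (cD * ((n:ℝ) * M.θbar * max M.θbar (M.θ a)))⁻¹ :=
          inv_anti₀ (by positivity) (hdeg' a)
        calc (Cmu * M.θ a ^ 2 / (M.θbar * max M.θbar (M.θ a))) * M.θ a * (M.deg a)⁻¹
            ≤ (Cmu * M.θ a ^ 2 / (M.θbar * max M.θbar (M.θ a))) * M.θ a *
              (cD * ((n:ℝ) * M.θbar * max M.θbar (M.θ a)))⁻¹ :=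
              mul_le_mul_of_nonneg_left hd (by positivity)
          _ ≤ Cmu / cD * (M.θ a / ((n:ℝ) * M.θbar ^ 2)) := by
              rw [show (Cmu * M.θ a ^ 2 / (M.θbar * max M.θbar (M.θ a))) * M.θ a *
                    (cD * ((n:ℝ) * M.θbar * max M.θbar (M.θ a)))⁻¹
                  = (Cmu * M.θ a ^ 3) /
                    ((M.θbar * max M.θbar (M.θ a)) *
                      (cD * ((n:ℝ) * M.θbar * max M.θbar (M.θ a)))) from by ring,
                show Cmu / cD * (M.θ a / ((n:ℝ) * M.θbar ^ 2))
                  = (Cmu * M.θ a) / (cD * ((n:ℝ) * M.θbar ^ 2)) from by ring,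
                div_le_div_iff₀ (by positivity) (by positivity)]
              have hq : M.θ a * M.θ a ≤ max M.θbar (M.θ a) * max M.θbar (M.θ a) :=
                mul_le_mul (hθle a) (hθle a) (hθ a).le (hMx a).le
              nlinarith [mul_le_mul_of_nonneg_left hq
                (show (0:ℝ) ≤ Cmu * M.θ a * cD * n * M.θbar ^ 2 by positivity)]
      have hsumbd : ∑ a ∈ Finset.univ.erase i,
          (Cmu * M.θ a ^ 2 / (M.θbar * max M.θbar (M.θ a))) * M.θ a * (M.deg a)⁻¹
          ≤ Cmu / (cD * M.θbar) := by
        calc ∑ a ∈ Finset.univ.erase i,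
            (Cmu * M.θ a ^ 2 / (M.θbar * max M.θbar (M.θ a))) * M.θ a * (M.deg a)⁻¹
            ≤ ∑ a,
              (Cmu * M.θ a ^ 2 / (M.θbar * max M.θbar (M.θ a))) * M.θ a * (M.deg a)⁻¹ :=
              Finset.sum_le_sum_of_subset_of_nonneg (Finset.subset_univ _)
                (fun a _ _ => mul_nonneg (mul_nonneg
                  (div_nonneg (by positivity) (mul_pos hθbar (hMx a)).le) (hθ a).le)
                  (inv_nonneg.mpr (hdegpos a).le))
          _ ≤ ∑ a, Cmu / cD * (M.θ a / ((n:ℝ) * M.θbar ^ 2)) :=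
              Finset.sum_le_sum hterm
          _ = Cmu / cD * ((∑ a, M.θ a) / ((n:ℝ) * M.θbar ^ 2)) := by
              rw [← Finset.mul_sum, ← Finset.sum_div]
          _ = Cmu / (cD * M.θbar) := by
              rw [hsumθ]; field_simp
      refine hsumbd.trans ?_
      have hlogn : Real.sqrt (Real.log 2) ≤ Real.sqrt (Real.log n) := by
        apply Real.sqrt_le_sqrt
        exact (Real.log_le_log_iff (by norm_num) (by linarith)).mpr h2n
      have hcc : Cmu / cD ≤ C' * Real.sqrt (Real.log n) := by
        have hX : C2 * Real.sqrt (Real.log 2) = Cmu / cD := by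
          rw [hC2]; field_simp
        calc Cmu / cD = C2 * Real.sqrt (Real.log 2) := hX.symm
          _ ≤ C' * Real.sqrt (Real.log 2) :=
              mul_le_mul_of_nonneg_right hC2le hlog2.le
          _ ≤ C' * Real.sqrt (Real.log n) :=
              mul_le_mul_of_nonneg_left hlogn hC'pos.le
      calc Cmu / (cD * M.θbar) = (Cmu / cD) / M.θbar := by rw [div_div]
        _ ≤ C' * Real.sqrt (Real.log n) / M.θbar := by gcongr
  -- Part (iii)
  have part3 : ∑ a, xi k a * (Real.sqrt (M.deg a) ^ 3)⁻¹ ≤ C' / ((n:ℝ) * M.θbar ^ 3) := by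
    have hb : ∀ a ∈ Finset.univ, xi k a * (Real.sqrt (M.deg a) ^ 3)⁻¹
        ≤ C' / ((n:ℝ) ^ 2 * M.θbar ^ 3) := by
      intro a _
      calc xi k a * (Real.sqrt (M.deg a) ^ 3)⁻¹
          ≤ |(Real.sqrt (M.deg a) ^ 3)⁻¹ * xi k a| := by
            rw [mul_comm]; exact le_abs_self _
        _ ≤ C' / ((n:ℝ) ^ 2 * M.θbar ^ 2 * max M.θbar (M.θ a)) := part1 a
        _ ≤ C' / ((n:ℝ) ^ 2 * M.θbar ^ 3) := by
            apply div_le_div_of_nonneg_left hC'pos.le (by positivity)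
            calc (n:ℝ) ^ 2 * M.θbar ^ 3 = (n:ℝ) ^ 2 * M.θbar ^ 2 * M.θbar := by ring
              _ ≤ (n:ℝ) ^ 2 * M.θbar ^ 2 * max M.θbar (M.θ a) :=
                  mul_le_mul_of_nonneg_left (hbarle a) (by positivity)
    calc ∑ a, xi k a * (Real.sqrt (M.deg a) ^ 3)⁻¹
        ≤ ∑ _a : Fin n, C' / ((n:ℝ) ^ 2 * M.θbar ^ 3) := Finset.sum_le_sum hb
      _ = (n:ℝ) * (C' / ((n:ℝ) ^ 2 * M.θbar ^ 3)) := by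
          rw [Finset.sum_const, Finset.card_univ, Fintype.card_fin, nsmul_eq_mul]
      _ = C' / ((n:ℝ) * M.θbar ^ 3) := by
          field_simp
  -- Part (iv)
  have hθmax : ∀ a, M.θ a ≤ M.θmax := by
    intro a
    exact le_ciSup (Set.Finite.bddAbove (Set.finite_range M.θ)) a
  have part4 : ∑ a, Real.sqrt ((Cmu * M.θ a ^ 2 / (M.θbar * max M.θbar (M.θ a))) *
      M.θ a ^ 2 / min M.θbar (M.θ a)) ≤ C' * n * Real.sqrt (M.θmax ^ 3 / M.θbar ^ 2) := by
    have hb : ∀ a ∈ Finset.univ,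
        Real.sqrt ((Cmu * M.θ a ^ 2 / (M.θbar * max M.θbar (M.θ a))) *
          M.θ a ^ 2 / min M.θbar (M.θ a))
        ≤ Real.sqrt Cmu * Real.sqrt (M.θmax ^ 3 / M.θbar ^ 2) := by
      intro a _
      rw [← Real.sqrt_mul hCmu.le]
      apply Real.sqrt_le_sqrt
      have key : (Cmu * M.θ a ^ 2 / (M.θbar * max M.θbar (M.θ a))) *
          M.θ a ^ 2 / min M.θbar (M.θ a) = Cmu * M.θ a ^ 3 / M.θbar ^ 2 := by
        rcases le_total M.θbar (M.θ a) with h | h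
        · rw [max_eq_right h, min_eq_left h]
          field_simp [hθbar.ne', (hθ a).ne']
        · rw [max_eq_left h, min_eq_right h]
          field_simp [hθbar.ne', (hθ a).ne']
      rw [key, mul_div_assoc]
      gcongr
      · exact (hθ a).le
      · exact hθmax a
    calc ∑ a, Real.sqrt ((Cmu * M.θ a ^ 2 / (M.θbar * max M.θbar (M.θ a))) *
          M.θ a ^ 2 / min M.θbar (M.θ a))
        ≤ ∑ _a : Fin n, Real.sqrt Cmu * Real.sqrt (M.θmax ^ 3 / M.θbar ^ 2) :=
          Finset.sum_le_sum hb
      _ = (n:ℝ) * (Real.sqrt Cmu * Real.sqrt (M.θmax ^ 3 / M.θbar ^ 2)) := by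
          rw [Finset.sum_const, Finset.card_univ, Fintype.card_fin, nsmul_eq_mul]
      _ ≤ C' * n * Real.sqrt (M.θmax ^ 3 / M.θbar ^ 2) := by
          nlinarith [mul_le_mul_of_nonneg_right hCmule
            (show (0:ℝ) ≤ (n:ℝ) * Real.sqrt (M.θmax ^ 3 / M.θbar ^ 2) by positivity)]
  -- Part (v)
  have part5 : ∑ a, M.θ a * Real.sqrt ((Cmu * M.θ a ^ 2 / (M.θbar * max M.θbar (M.θ a))) /
      max M.θbar (M.θ a)) ≤ C' * n * Real.sqrt M.θbar := by
    have hb : ∀ a ∈ Finset.univ,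
        M.θ a * Real.sqrt ((Cmu * M.θ a ^ 2 / (M.θbar * max M.θbar (M.θ a))) /
          max M.θbar (M.θ a)) ≤ Real.sqrt (Cmu / M.θbar) * M.θ a := by
      intro a _
      have hin : Cmu * M.θ a ^ 2 / (M.θbar * max M.θbar (M.θ a)) / max M.θbar (M.θ a)
          ≤ Cmu / M.θbar := by
        rw [div_div, div_le_div_iff₀ (by positivity) hθbar]
        have hq : M.θ a * M.θ a ≤ max M.θbar (M.θ a) * max M.θbar (M.θ a) :=
          mul_le_mul (hθle a) (hθle a) (hθ a).le (hMx a).le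
        nlinarith [mul_le_mul_of_nonneg_left hq (show (0:ℝ) ≤ Cmu * M.θbar by positivity)]
      calc M.θ a * Real.sqrt ((Cmu * M.θ a ^ 2 / (M.θbar * max M.θbar (M.θ a))) /
            max M.θbar (M.θ a))
          ≤ M.θ a * Real.sqrt (Cmu / M.θbar) :=
            mul_le_mul_of_nonneg_left (Real.sqrt_le_sqrt hin) (hθ a).le
        _ = Real.sqrt (Cmu / M.θbar) * M.θ a := mul_comm _ _
    calc ∑ a, M.θ a * Real.sqrt ((Cmu * M.θ a ^ 2 / (M.θbar * max M.θbar (M.θ a))) /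
          max M.θbar (M.θ a))
        ≤ ∑ a, Real.sqrt (Cmu / M.θbar) * M.θ a := Finset.sum_le_sum hb
      _ = Real.sqrt (Cmu / M.θbar) * ((n:ℝ) * M.θbar) := by
          rw [← Finset.mul_sum, hsumθ]
      _ = Real.sqrt Cmu * ((n:ℝ) * Real.sqrt M.θbar) := by
          rw [Real.sqrt_div hCmu.le,
            show Real.sqrt Cmu / Real.sqrt M.θbar * ((n:ℝ) * M.θbar)
              = Real.sqrt Cmu * ((n:ℝ) * (M.θbar / Real.sqrt M.θbar)) from by ring,
            Real.div_sqrt]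
      _ ≤ C' * n * Real.sqrt M.θbar := by
          nlinarith [mul_le_mul_of_nonneg_right hCmule
            (show (0:ℝ) ≤ (n:ℝ) * Real.sqrt M.θbar by positivity)]
  exact ⟨part1, part2, part3, part4, part5⟩
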